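/- Let A = [[0, I], [−L, −I]] with L symmetric, L·𝟏 = 0, having distinct eigenvalues, and let C select position outputs of monitored agents: C·(x,v) = (c₁x₁, …, cₘxₘ) with all cᵢ ≠ 0 and the Laplacian–output pair satisfying: some row i ≤ m of the orthogonal eigenvector matrix Q of L has all entries nonzero. Then the pair (A, C) is observable: ker O(A, C) = {0}. -/

import Mathlib

open Matrix Polynomial

noncomputable def Sop : Module.End ℝ (ℕ → ℝ) where
  toFun a := fun k => a (k+1)
  map_add' _ _ := rfl
  map_smul' _ _ := rfl

lemma Sop_pow (t : ℕ) (a : ℕ → ℝ) (k : ℕ) : ((Sop ^ t) a) k = a (k + t) := by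
  induction t generalizing a k with
  | zero => simp
  | succ t ih =>
      rw [pow_succ, Module.End.mul_apply, ih]
      rfl

lemma aeval_Sop_apply (p : ℝ[X]) (a : ℕ → ℝ) (k : ℕ) :
    (aeval Sop p) a k = ∑ t ∈ Finset.range (p.natDegree + 1), p.coeff t * a (k + t) := by
  rw [Polynomial.aeval_eq_sum_range]
  simp [LinearMap.sum_apply, Finset.sum_apply, Sop_pow]

noncomputable def chi (l : ℝ) : ℝ[X] := X^2 + X + C l

lemma chi_monic (l : ℝ) : (chi l).Monic := by
  unfold chi; monicity!

lemma chi_natDegree (l : ℝ) : (chi l).natDegree = 2 := by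
  unfold chi; compute_degree!

lemma chi_coprime {l1 l2 : ℝ} (h : l1 ≠ l2) : IsCoprime (chi l1) (chi l2) := by
  refine ⟨C (l1 - l2)⁻¹, -C (l1 - l2)⁻¹, ?_⟩
  have hne : l1 - l2 ≠ 0 := sub_ne_zero.mpr h
  unfold chi
  have h2 : (C (l1 - l2)⁻¹ : ℝ[X]) * (X^2 + X + C l1) + (-C (l1-l2)⁻¹) * (X^2 + X + C l2)
      = C ((l1-l2)⁻¹ * (l1 - l2)) := by
    rw [Polynomial.C_mul, Polynomial.C_sub]; ring
  rw [h2, inv_mul_cancel₀ hne, Polynomial.C_1]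

lemma aeval_chi_eq_zero (l : ℝ) (a : ℕ → ℝ)
    (h : ∀ k, a (k+2) = -a (k+1) - l * a k) :
    (aeval Sop (chi l)) a = 0 := by
  funext k
  have hd := chi_natDegree l
  rw [aeval_Sop_apply, hd]
  have c0 : (chi l).coeff 0 = l := by unfold chi; simp
  have c1 : (chi l).coeff 1 = 1 := by unfold chi; simp
  have c2 : (chi l).coeff 2 = 1 := by unfold chi; simp [Polynomial.coeff_X]
  rw [Finset.sum_range_succ, Finset.sum_range_succ, Finset.sum_range_one,
    c0, c1, c2, h k]
  show _ = (0 : ℕ → ℝ) k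
  simp; ring

/-- A sequence killed by a monic polynomial of degree d, vanishing on the
first d terms, vanishes identically. -/
lemma seq_eq_zero (P : ℝ[X]) (hP : P.Monic) (a : ℕ → ℝ)
    (hkill : (aeval Sop P) a = 0)
    (h0 : ∀ k < P.natDegree, a k = 0) : a = 0 := by
  funext k
  induction k using Nat.strong_induction_on with
  | _ k ih =>
    by_cases hk : k < P.natDegree
    · exact h0 k hk
    · push_neg at hk
      set d := P.natDegree with hd
      have hk' : k = (k - d) + d := by omega
      have h1 : (aeval Sop P) a (k - d) = 0 := by rw [hkill]; rfl
      rw [aeval_Sop_apply, Finset.sum_range_succ, hP.coeff_natDegree, one_mul] at h1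
      have h2 : ∀ t ∈ Finset.range d, P.coeff t * a (k - d + t) = 0 := by
        intro t ht
        rw [Finset.mem_range] at ht
        simp [ih (k - d + t) (by omega)]
      rw [Finset.sum_eq_zero h2, zero_add] at h1
      rw [hk']
      exact h1

/-- With position-only outputs and a Laplacian satisfying the defense
conditions (distinct eigenvalues, a monitored row of the eigenvector matrix
with all entries nonzero), the pair `(A, C)` is observable. -/
theorem position_output_observable
    {n m : ℕ} (hm : m ≤ n)
    (L : Matrix (Fin n) (Fin n) ℝ) (hLsym : L.IsSymm)
    (hL1 : L.mulVec (fun _ => 1) = 0)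
    (Q : Matrix (Fin n) (Fin n) ℝ) (hQ : Q * Qᵀ = 1)
    (lam : Fin n → ℝ) (hdistinct : Function.Injective lam)
    (hspec : L = Q * Matrix.diagonal lam * Qᵀ)
    (i : Fin n) (hi : (i : ℕ) < m) (hrow : ∀ j, Q i j ≠ 0)
    (A : Matrix (Fin n ⊕ Fin n) (Fin n ⊕ Fin n) ℝ)
    (hA : A = Matrix.fromBlocks 0 1 (-L) (-1))
    (c : Fin m → ℝ) (hc : ∀ k, c k ≠ 0)
    (C : Matrix (Fin m) (Fin n ⊕ Fin n) ℝ)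
    (hC : ∀ k j, C k j = if j = Sum.inl (Fin.castLE hm k) then c k else 0) :
    ∀ w : Fin n ⊕ Fin n → ℝ,
      (∀ k < 2 * n, C.mulVec ((A ^ k).mulVec w) = 0) → w = 0 := by
  intro w hobs
  have hQtQ : Qᵀ * Q = 1 := mul_eq_one_comm.mp hQ
  have hQtL : Qᵀ * L = Matrix.diagonal lam * Qᵀ := by
    rw [hspec, ← Matrix.mul_assoc, ← Matrix.mul_assoc, hQtQ, Matrix.one_mul]
  set Xs : ℕ → Fin n → ℝ := fun k t => (A ^ k).mulVec w (Sum.inl t) with hXs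
  set Vs : ℕ → Fin n → ℝ := fun k t => (A ^ k).mulVec w (Sum.inr t) with hVs
  have hsplit : ∀ k, (A ^ (k+1)).mulVec w
      = Sum.elim (Vs k) (-(L.mulVec (Xs k)) - Vs k) := by
    intro k
    have h1 : (A ^ (k+1)).mulVec w = A.mulVec ((A ^ k).mulVec w) := by
      rw [pow_succ', ← Matrix.mulVec_mulVec]
    have h2 : (A ^ k).mulVec w = Sum.elim (Xs k) (Vs k) := by
      funext j; cases j <;> rfl
    rw [h1, h2, hA, Matrix.fromBlocks_mulVec]
    funext j
    cases j with
    | inl t => simp [Matrix.zero_mulVec, Matrix.one_mulVec]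
    | inr t => simp [Matrix.neg_mulVec, Matrix.one_mulVec, sub_eq_add_neg]
  have hX1 : ∀ k, Xs (k+1) = Vs k := by
    intro k; funext t; exact congrFun (hsplit k) (Sum.inl t)
  have hV1 : ∀ k, Vs (k+1) = -(L.mulVec (Xs k)) - Vs k := by
    intro k; funext t; exact congrFun (hsplit k) (Sum.inr t)
  set a : Fin n → ℕ → ℝ := fun j k => Qᵀ.mulVec (Xs k) j with ha
  set b : Fin n → ℕ → ℝ := fun j k => Qᵀ.mulVec (Vs k) j with hb
  have hab : ∀ j k, a j (k+1) = b j k := by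
    intro j k; simp only [ha, hb, hX1]
  have hbrec : ∀ j k, b j (k+1) = -(lam j * a j k) - b j k := by
    intro j k
    show Qᵀ.mulVec (Vs (k+1)) j = _
    rw [hV1, Matrix.mulVec_sub, Matrix.mulVec_neg, Matrix.mulVec_mulVec, hQtL,
      ← Matrix.mulVec_mulVec]
    simp only [Pi.sub_apply, Pi.neg_apply, Matrix.mulVec_diagonal]
    rfl
  have harec : ∀ j k, a j (k+2) = -(a j (k+1)) - lam j * a j k := by
    intro j k
    have : a j (k+2) = b j (k+1) := hab j (k+1)
    rw [this, hbrec, ← hab]; ring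
  have hobs' : ∀ k < 2*n, Xs k i = 0 := by
    intro k hk
    have h := congrFun (hobs k hk) ⟨i.1, hi⟩
    have hcast : Fin.castLE hm (⟨i.1, hi⟩ : Fin m) = i := rfl
    have h2 : C.mulVec ((A ^ k).mulVec w) ⟨i.1, hi⟩
        = c ⟨i.1, hi⟩ * (A ^ k).mulVec w (Sum.inl i) := by
      simp only [Matrix.mulVec, dotProduct, hC, hcast, ite_mul, zero_mul]
      rw [Finset.sum_ite_eq' Finset.univ (Sum.inl i)]
      simp
    rw [h2] at h
    have := hc ⟨i.1, hi⟩
    have hz : (A ^ k).mulVec w (Sum.inl i) = 0 := by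
      rcases (by simpa using h : c ⟨i.1, hi⟩ = 0 ∨ (A ^ k).mulVec w (Sum.inl i) = 0) with h' | h'
      · exact absurd h' this
      · exact h'
    exact hz
  set s : ℕ → ℝ := fun k => Xs k i with hs
  have hs_eq : s = ∑ j, Q i j • a j := by
    funext k
    have hXk : Xs k = Q.mulVec (Qᵀ.mulVec (Xs k)) := by
      rw [Matrix.mulVec_mulVec, hQ, Matrix.one_mulVec]
    have : s k = (Q.mulVec (Qᵀ.mulVec (Xs k))) i := by rw [hs, ← hXk]
    rw [this]
    simp [Matrix.mulVec, dotProduct, Finset.sum_apply, ha]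
  set P : ℝ[X] := ∏ j : Fin n, chi (lam j) with hP
  have hPmonic : P.Monic := monic_prod_of_monic _ _ (fun j _ => chi_monic _)
  have hPdeg : P.natDegree = 2 * n := by
    rw [hP, Polynomial.natDegree_prod _ _ (fun j _ => (chi_monic (lam j)).ne_zero)]
    simp [chi_natDegree, Finset.sum_const, mul_comm]
  have hkill : ∀ j, (aeval Sop (chi (lam j))) (a j) = 0 := by
    intro j
    exact aeval_chi_eq_zero _ _ (fun k => by rw [harec])
  have hkillP : ∀ j, (aeval Sop P) (a j) = 0 := by
    intro j
    have hfac : P = (∏ t ∈ Finset.univ.erase j, chi (lam t)) * chi (lam j) := by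
      rw [mul_comm]
      exact (Finset.mul_prod_erase _ _ (Finset.mem_univ j)).symm
    rw [hfac, _root_.map_mul, Module.End.mul_apply, hkill j, map_zero]
  have hskill : (aeval Sop P) s = 0 := by
    rw [hs_eq, map_sum]
    refine Finset.sum_eq_zero (fun j _ => ?_)
    rw [_root_.map_smul, hkillP j, smul_zero]
  have hs0 : s = 0 := seq_eq_zero P hPmonic s hskill (by rw [hPdeg]; exact hobs')
  have hazero : ∀ j, a j = 0 := by
    intro j
    set Pj : ℝ[X] := ∏ t ∈ Finset.univ.erase j, chi (lam t) with hPj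
    have hPja : (aeval Sop Pj) (a j) = 0 := by
      have h1 : (aeval Sop Pj) s = 0 := by rw [hs0]; exact map_zero _
      rw [hs_eq, map_sum] at h1
      have hterm : ∀ t ∈ Finset.univ, t ≠ j → (aeval Sop Pj) (Q i t • a t) = 0 := by
        intro t _ htj
        rw [_root_.map_smul]
        have hfac : Pj = (∏ u ∈ (Finset.univ.erase j).erase t, chi (lam u)) * chi (lam t) := by
          rw [mul_comm]
          exact (Finset.mul_prod_erase _ _
            (Finset.mem_erase.mpr ⟨htj, Finset.mem_univ t⟩)).symm
        rw [hfac, _root_.map_mul, Module.End.mul_apply, hkill t, map_zero, smul_zero]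
      rw [Finset.sum_eq_single j (fun t ht htj => hterm t ht htj) (by simp)] at h1
      rw [_root_.map_smul] at h1
      rcases smul_eq_zero.mp h1 with h' | h'
      · exact absurd h' (hrow j)
      · exact h'
    have hcop : IsCoprime (chi (lam j)) Pj := by
      refine IsCoprime.prod_right (fun t ht => chi_coprime ?_)
      intro hlam
      exact (Finset.mem_erase.mp ht).1 (hdistinct hlam).symm
    obtain ⟨u, v, huv⟩ := hcop
    have hone : a j = (aeval Sop (u * chi (lam j) + v * Pj)) (a j) := by
      rw [huv, _root_.map_one, Module.End.one_apply]
    rw [hone, _root_.map_add, _root_.map_mul, _root_.map_mul, LinearMap.add_apply,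
      Module.End.mul_apply, Module.End.mul_apply, hkill j, hPja, map_zero, map_zero,
      add_zero]
  have hQtX0 : Qᵀ.mulVec (Xs 0) = 0 := by
    funext j; exact congrFun (hazero j) 0
  have hQtV0 : Qᵀ.mulVec (Vs 0) = 0 := by
    funext j
    have h1 : a j 1 = 0 := congrFun (hazero j) 1
    rw [hab j 0] at h1
    exact h1
  have hX0 : Xs 0 = 0 := by
    have : Xs 0 = Q.mulVec (Qᵀ.mulVec (Xs 0)) := by
      rw [Matrix.mulVec_mulVec, hQ, Matrix.one_mulVec]
    rw [this, hQtX0, Matrix.mulVec_zero]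
  have hV0 : Vs 0 = 0 := by
    have : Vs 0 = Q.mulVec (Qᵀ.mulVec (Vs 0)) := by
      rw [Matrix.mulVec_mulVec, hQ, Matrix.one_mulVec]
    rw [this, hQtV0, Matrix.mulVec_zero]
  funext j
  cases j with
  | inl t =>
      have : Xs 0 t = w (Sum.inl t) := by
        simp [hXs, Matrix.one_mulVec]
      rw [← this, hX0]; rfl
  | inr t =>
      have : Vs 0 t = w (Sum.inr t) := by
        simp [hVs, Matrix.one_mulVec]
      rw [← this, hV0]; rfl
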